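/- Let x ∈ A^ℤ be uniformly recurrent non-periodic with orbit closure X, and suppose m ≥ (R_x(4) − 1)/2. Then for every m-cylinder U of X, the sets σ^i(U) for −2 ≤ i ≤ 2 are pairwise disjoint. -/

import Mathlib

/-- The set of `n`-factors of a two-sided infinite word `w`. -/
def factorsZ {A : Type*} (w : ℤ → A) (n : ℕ) : Set (Fin n → A) :=
  {u | ∃ k : ℤ, ∀ i : Fin n, u i = w (k + (i : ℤ))}

/-- The complexity function of a two-sided infinite word. -/
noncomputable def complexityZ {A : Type*} (w : ℤ → A) (n : ℕ) : ℕ :=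
  Nat.card (factorsZ w n)

/-- `u` occurs in the length-`M` window of `w` starting at `k`. -/
def OccursIn {A : Type*} (w : ℤ → A) {n : ℕ} (u : Fin n → A) (k : ℤ) (M : ℕ) : Prop :=
  ∃ j : ℤ, k ≤ j ∧ j + (n : ℤ) ≤ k + (M : ℤ) ∧ ∀ i : Fin n, u i = w (j + (i : ℤ))

/-- `M` is a recurrence bound for length-`n` factors of `w`. -/
def IsRecurrenceBound {A : Type*} (w : ℤ → A) (n M : ℕ) : Prop :=
  ∀ u ∈ factorsZ w n, ∀ k : ℤ, OccursIn w u k M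

def UniformlyRecurrent {A : Type*} (w : ℤ → A) : Prop :=
  ∀ n : ℕ, ∃ M : ℕ, IsRecurrenceBound w n M

/-- The recurrence function of `w`. -/
noncomputable def recurrenceFn {A : Type*} (w : ℤ → A) (n : ℕ) : ℕ :=
  sInf {M | IsRecurrenceBound w n M}

def PeriodicWord {A : Type*} (w : ℤ → A) : Prop :=
  ∃ k : ℤ, 1 ≤ k ∧ ∀ i : ℤ, w (i + k) = w i

/-- The `i`-th power of the shift: `(shiftFun i y) t = y (t + i)`. -/
def shiftFun {A : Type*} (i : ℤ) (y : ℤ → A) : ℤ → A := fun t => y (t + i)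

/-- Image of a set of words under the `i`-th power of the shift. -/
def shiftSet {A : Type*} (i : ℤ) (W : Set (ℤ → A)) : Set (ℤ → A) := shiftFun i '' W

/-- The cylinder set determined by a word `u` of length `2m+1` centred at the origin:
`{ y : y i = u (i + m) for −m ≤ i ≤ m }`. -/
def cylC {A : Type*} (m : ℕ) (u : Fin (2 * m + 1) → A) : Set (ℤ → A) :=
  {y | ∀ i : Fin (2 * m + 1), y ((i : ℤ) - (m : ℤ)) = u i}

/-- `U` is an `m`-cylinder of `X`: a nonempty intersection of `X` with a centred cylinder. -/
def IsMCylinder {A : Type*} (X : Set (ℤ → A)) (m : ℕ) (U : Set (ℤ → A)) : Prop :=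
  (∃ u : Fin (2 * m + 1) → A, U = X ∩ cylC m u) ∧ U.Nonempty

namespace Stmt11Aux

open Function

variable {A : Type*}

lemma window_mem (x : ℤ → A) (n : ℕ) (a : ℤ) :
    (fun i : Fin n => x (a + (i : ℤ))) ∈ factorsZ x n := ⟨a, fun _ => rfl⟩

/-- Drop the last letter of a `(k+1)`-factor. -/
noncomputable def dropLastMap (x : ℤ → A) (k : ℕ) :
    ↥(factorsZ x (k + 1)) → ↥(factorsZ x k) := fun u =>
  ⟨fun i => u.1 i.castSucc, by
    obtain ⟨a, ha⟩ := u.2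
    exact ⟨a, fun i => by simpa using ha i.castSucc⟩⟩

/-- Drop the first letter of a `(k+1)`-factor. -/
noncomputable def dropFirstMap (x : ℤ → A) (k : ℕ) :
    ↥(factorsZ x (k + 1)) → ↥(factorsZ x k) := fun u =>
  ⟨fun i => u.1 i.succ, by
    obtain ⟨a, ha⟩ := u.2
    refine ⟨a + 1, fun i => ?_⟩
    have := ha i.succ
    rwa [show a + ((i.succ : ℕ) : ℤ) = a + 1 + (i : ℤ) by
      push_cast [Fin.val_succ]; ring] at this⟩

lemma dropLastMap_surj (x : ℤ → A) (k : ℕ) : Surjective (dropLastMap x k) := by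
  rintro ⟨u, a, ha⟩
  refine ⟨⟨fun i : Fin (k + 1) => x (a + (i : ℤ)), window_mem x _ a⟩, ?_⟩
  apply Subtype.ext; funext i
  show x (a + ((i.castSucc : ℕ) : ℤ)) = u i
  rw [ha i]
  norm_num

lemma dropFirstMap_surj (x : ℤ → A) (k : ℕ) : Surjective (dropFirstMap x k) := by
  rintro ⟨u, a, ha⟩
  refine ⟨⟨fun i : Fin (k + 1) => x (a - 1 + (i : ℤ)), window_mem x _ (a - 1)⟩, ?_⟩
  apply Subtype.ext; funext i
  show x (a - 1 + ((i.succ : ℕ) : ℤ)) = u i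
  rw [ha i, show a - 1 + ((i.succ : ℕ) : ℤ) = a + (i : ℤ) by push_cast [Fin.val_succ]; ring]

variable [Fintype A]

lemma complexity_mono (x : ℤ → A) (k : ℕ) : complexityZ x k ≤ complexityZ x (k + 1) :=
  Nat.card_le_card_of_surjective _ (dropLastMap_surj x k)

lemma complexity_zero (x : ℤ → A) : complexityZ x 0 = 1 := by
  have h : factorsZ x 0 = Set.univ := by
    ext u
    simp only [Set.mem_univ, iff_true]
    exact ⟨0, fun i => i.elim0⟩
  rw [complexityZ, h]
  simp [Nat.card_eq_fintype_card]

lemma fwd_det (x : ℤ → A) {k : ℕ} (hk : complexityZ x (k + 1) ≤ complexityZ x k)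
    (a b : ℤ) (h : ∀ i : Fin k, x (a + (i : ℤ)) = x (b + (i : ℤ))) :
    x (a + (k : ℤ)) = x (b + (k : ℤ)) := by
  have hbij := (dropLastMap_surj x k).bijective_of_nat_card_le hk
  have heq : (⟨fun i : Fin (k + 1) => x (a + (i : ℤ)), window_mem x _ a⟩ : ↥(factorsZ x (k + 1)))
      = ⟨fun i : Fin (k + 1) => x (b + (i : ℤ)), window_mem x _ b⟩ := by
    apply hbij.injective
    apply Subtype.ext; funext i
    show x (a + ((i.castSucc : ℕ) : ℤ)) = x (b + ((i.castSucc : ℕ) : ℤ))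
    simpa using h i
  have := congrFun (congrArg Subtype.val heq) ⟨k, Nat.lt_succ_self k⟩
  exact this

lemma bwd_det (x : ℤ → A) {k : ℕ} (hk : complexityZ x (k + 1) ≤ complexityZ x k)
    (a b : ℤ) (h : ∀ i : Fin k, x (a + (i : ℤ)) = x (b + (i : ℤ))) :
    x (a - 1) = x (b - 1) := by
  have hbij := (dropFirstMap_surj x k).bijective_of_nat_card_le hk
  have heq : (⟨fun i : Fin (k + 1) => x (a - 1 + (i : ℤ)), window_mem x _ (a - 1)⟩ :
      ↥(factorsZ x (k + 1)))
      = ⟨fun i : Fin (k + 1) => x (b - 1 + (i : ℤ)), window_mem x _ (b - 1)⟩ := by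
    apply hbij.injective
    apply Subtype.ext; funext i
    show x (a - 1 + ((i.succ : ℕ) : ℤ)) = x (b - 1 + ((i.succ : ℕ) : ℤ))
    have e : ∀ c : ℤ, c - 1 + ((i.succ : ℕ) : ℤ) = c + (i : ℤ) := by
      intro c; push_cast [Fin.val_succ]; ring
    rw [e a, e b]; exact h i
  have h0 : x (a - 1 + ((0 : ℕ) : ℤ)) = x (b - 1 + ((0 : ℕ) : ℤ)) :=
    congrFun (congrArg Subtype.val heq) ⟨0, Nat.succ_pos k⟩
  simpa using h0

lemma propagate (x : ℤ → A) {k : ℕ} (hk : complexityZ x (k + 1) ≤ complexityZ x k)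
    (a b : ℤ) (h : ∀ i : Fin k, x (a + (i : ℤ)) = x (b + (i : ℤ))) :
    ∀ t : ℤ, x (a + t) = x (b + t) := by
  have Q : ∀ s : ℤ, ∀ i : Fin k, x (a + s + (i : ℤ)) = x (b + s + (i : ℤ)) := by
    intro s
    induction s using Int.induction_on with
    | zero => intro i; simpa using h i
    | succ s ih =>
      intro i
      rcases lt_or_eq_of_le (Nat.succ_le_of_lt i.2) with hik | hik
      · have := ih ⟨(i : ℕ) + 1, hik⟩
        rw [show a + ((s : ℤ) + 1) + (i : ℤ) = a + s + (((i : ℕ) + 1 : ℕ) : ℤ) by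
            push_cast; ring,
          show b + ((s : ℤ) + 1) + (i : ℤ) = b + s + (((i : ℕ) + 1 : ℕ) : ℤ) by
            push_cast; ring]
        exact this
      · have hik' : (i : ℕ) + 1 = k := hik
        have := fwd_det x hk (a + s) (b + s) ih
        rw [show a + ((s : ℤ) + 1) + (i : ℤ) = a + s + ((((i : ℕ) + 1 : ℕ)) : ℤ) by
            push_cast; ring,
          show b + ((s : ℤ) + 1) + (i : ℤ) = b + s + ((((i : ℕ) + 1 : ℕ)) : ℤ) by
            push_cast; ring, hik']
        exact this
    | pred s ih =>
      intro i
      rcases Nat.eq_zero_or_pos (i : ℕ) with hi | hi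
      · have := bwd_det x hk (a + -(s : ℤ)) (b + -(s : ℤ)) ih
        rw [show a + (-(s : ℤ) - 1) + (i : ℤ) = a + -(s : ℤ) - 1 by
            rw [show ((i : ℕ) : ℤ) = 0 by exact_mod_cast hi]; ring,
          show b + (-(s : ℤ) - 1) + (i : ℤ) = b + -(s : ℤ) - 1 by
            rw [show ((i : ℕ) : ℤ) = 0 by exact_mod_cast hi]; ring]
        exact this
      · have := ih ⟨(i : ℕ) - 1, by omega⟩
        rw [show a + (-(s : ℤ) - 1) + (i : ℤ) = a + -(s : ℤ) + ((((i : ℕ) - 1 : ℕ)) : ℤ) by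
            have : (1 : ℤ) ≤ ((i : ℕ) : ℤ) := by exact_mod_cast hi
            push_cast [Nat.cast_sub hi]; ring,
          show b + (-(s : ℤ) - 1) + (i : ℤ) = b + -(s : ℤ) + ((((i : ℕ) - 1 : ℕ)) : ℤ) by
            push_cast [Nat.cast_sub hi]; ring]
        exact this
  intro t
  have := fwd_det x hk (a + (t - (k : ℤ))) (b + (t - (k : ℤ)))
    (fun i => by
      have := Q (t - (k : ℤ)) i
      rwa [show a + (t - (k : ℤ)) + (i : ℤ) = a + (t - (k : ℤ)) + (i : ℤ) from rfl] at this)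
  rwa [show a + (t - (k : ℤ)) + (k : ℤ) = a + t by ring,
    show b + (t - (k : ℤ)) + (k : ℤ) = b + t by ring] at this

/-- Morse–Hedlund-type consequence: complexity `≤ 4` at length 4 forces periodicity. -/
lemma periodic_of_c4 (x : ℤ → A) (h4 : complexityZ x 4 ≤ 4) : PeriodicWord x := by
  have h0 := complexity_zero x
  have hex : ∃ k, complexityZ x (k + 1) ≤ complexityZ x k := by
    by_contra hcon
    push_neg at hcon
    have h1 : complexityZ x 0 < complexityZ x 1 := hcon 0
    have h2 : complexityZ x 1 < complexityZ x 2 := hcon 1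
    have h3 : complexityZ x 2 < complexityZ x 3 := hcon 2
    have h5 : complexityZ x 3 < complexityZ x 4 := hcon 3
    omega
  obtain ⟨k, hk⟩ := hex
  have key : ∀ c d : ℤ, c < d → (∀ i : Fin k, x (c + (i : ℤ)) = x (d + (i : ℤ))) →
      PeriodicWord x := by
    intro c d hcd he
    refine ⟨d - c, by omega, fun t => ?_⟩
    have := propagate x hk c d he (t - c)
    rw [show c + (t - c) = t by ring, show d + (t - c) = t + (d - c) by ring] at this
    exact this.symm
  obtain ⟨r, r', hrr, hf⟩ := Fintype.exists_ne_map_eq_of_card_lt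
    (fun r : Fin (Fintype.card (Fin k → A) + 1) => (fun i : Fin k => x (((r : ℕ) : ℤ) + (i : ℤ))))
    (by simp)
  have hwin : ∀ i : Fin k, x (((r : ℕ) : ℤ) + (i : ℤ)) = x (((r' : ℕ) : ℤ) + (i : ℤ)) :=
    fun i => congrFun hf i
  rcases hrr.lt_or_gt with hlt | hlt
  · exact key _ _ (by exact_mod_cast hlt) hwin
  · exact key _ _ (by exact_mod_cast hlt) (fun i => (hwin i).symm)

lemma closure_window [TopologicalSpace A] [DiscreteTopology A] (x z : ℤ → A)
    (hz : z ∈ closure (Set.range fun n : ℤ => shiftFun n x)) (F : Finset ℤ) :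
    ∃ n : ℤ, ∀ t ∈ F, z t = x (t + n) := by
  have hopen : IsOpen {w : ℤ → A | ∀ t ∈ F, w t = z t} := by
    have he : {w : ℤ → A | ∀ t ∈ F, w t = z t}
        = ⋂ t ∈ F, (fun w : ℤ → A => w t) ⁻¹' {z t} := by
      ext w; simp
    rw [he]
    exact isOpen_biInter_finset fun t _ =>
      (continuous_apply t).isOpen_preimage _ (isOpen_discrete _)
  obtain ⟨w, hw1, hw2⟩ := mem_closure_iff.1 hz _ hopen (fun t _ => rfl)
  obtain ⟨n, rfl⟩ := hw2
  exact ⟨n, fun t ht => (hw1 t ht).symm⟩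

/-- Reduce an occurrence inside a `p`-periodic window to one of the first `p` positions. -/
lemma reduce (x : ℤ → A) (L Rt p : ℤ) (hp : 0 < p)
    (hper : ∀ s : ℤ, L ≤ s → s ≤ Rt → x (s + p) = x s) :
    ∀ d : ℕ, ∀ j : ℤ, j = L + (d : ℤ) → j + 3 ≤ Rt →
      ∃ j0 : ℤ, L ≤ j0 ∧ j0 < L + p ∧ ∀ i : Fin 4, x (j + (i : ℤ)) = x (j0 + (i : ℤ)) := by
  intro d
  induction d using Nat.strong_induction_on with
  | _ d ih =>
    intro j hj hjR
    by_cases hcase : j < L + p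
    · exact ⟨j, by omega, hcase, fun i => rfl⟩
    · obtain ⟨j0, h1, h2, h3⟩ := ih (d - p.toNat) (by omega) (j - p) (by omega) (by omega)
      refine ⟨j0, h1, h2, fun i => ?_⟩
      have hi : ((i : ℕ) : ℤ) < 4 := by exact_mod_cast i.2
      have hper' : x (j - p + (i : ℤ) + p) = x (j - p + (i : ℤ)) :=
        hper _ (by omega) (by omega)
      rw [show j + (i : ℤ) = j - p + (i : ℤ) + p by ring, hper', h3 i]

end Stmt11Aux

open Stmt11Aux in
/-- if `m ≥ (R_x(4) − 1)/2` (i.e. `R_x(4) ≤ 2m+1`), then for every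
`m`-cylinder `U` of `X`, the five shifts `σ^i(U)`, `−2 ≤ i ≤ 2`, are pairwise
disjoint. -/
theorem stmt11 {A : Type*} [Fintype A] [TopologicalSpace A] [DiscreteTopology A]
    (x : ℤ → A) (hUR : UniformlyRecurrent x) (hNP : ¬ PeriodicWord x)
    (X : Set (ℤ → A)) (hX : X = closure (Set.range fun n : ℤ => shiftFun n x))
    (m : ℕ) (hm : recurrenceFn x 4 ≤ 2 * m + 1)
    (U : Set (ℤ → A)) (hU : IsMCylinder X m U) :
    ∀ i j : ℤ, -2 ≤ i → i ≤ 2 → -2 ≤ j → j ≤ 2 → i ≠ j →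
      Disjoint (shiftSet i U) (shiftSet j U) := by
  suffices key : ∀ i j : ℤ, -2 ≤ j → j < i → i ≤ 2 → Disjoint (shiftSet i U) (shiftSet j U) by
    intro i j hi1 hi2 hj1 hj2 hne
    rcases hne.lt_or_gt with h | h
    · exact (key j i hi1 h hj2).symm
    · exact key i j hj1 h hi2
  intro i j hj1 hji hi2
  rw [Set.disjoint_left]
  rintro y ⟨z, hzU, hzy⟩ ⟨z', hz'U, hz'y⟩
  exfalso
  apply hNP
  obtain ⟨⟨u, hUeq⟩, -⟩ := hU
  set p : ℤ := i - j with hpdef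
  have hp1 : 0 < p := by omega
  have hp4 : p ≤ 4 := by omega
  have hzz : ∀ t : ℤ, z' t = z (t + p) := by
    intro t
    have h1 : z (t - j + i) = y (t - j) := congrFun hzy (t - j)
    have h2 : z' (t - j + j) = y (t - j) := congrFun hz'y (t - j)
    have h3 : z' (t - j + j) = z (t - j + i) := h2.trans h1.symm
    rwa [show t - j + j = t by ring, show t - j + i = t + p by rw [hpdef]; ring] at h3
  rw [hUeq] at hzU hz'U
  have hzX : z ∈ X := hzU.1
  have hzc : z ∈ cylC m u := hzU.2
  have hz'c : z' ∈ cylC m u := hz'U.2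
  -- z has period p on [-m, m]
  have hzper : ∀ s : ℤ, -(m : ℤ) ≤ s → s ≤ (m : ℤ) → z (s + p) = z s := by
    intro s h1 h2
    have hlt : (s + (m : ℤ)).toNat < 2 * m + 1 := by omega
    have key1 : z ((((s + (m : ℤ)).toNat : ℕ) : ℤ) - (m : ℤ))
        = u ⟨(s + (m : ℤ)).toNat, hlt⟩ := hzc ⟨(s + (m : ℤ)).toNat, hlt⟩
    have key2 : z' ((((s + (m : ℤ)).toNat : ℕ) : ℤ) - (m : ℤ))
        = u ⟨(s + (m : ℤ)).toNat, hlt⟩ := hz'c ⟨(s + (m : ℤ)).toNat, hlt⟩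
    have e : (((s + (m : ℤ)).toNat : ℕ) : ℤ) - (m : ℤ) = s := by omega
    rw [e] at key1 key2
    have hthis := hzz s
    rw [key2] at hthis
    rw [key1]
    exact hthis.symm
  -- transfer to x via the closure
  have hzX' : z ∈ closure (Set.range fun n : ℤ => shiftFun n x) := hX ▸ hzX
  obtain ⟨n, hn⟩ := closure_window x z hzX' (Finset.Icc (-(m : ℤ)) ((m : ℤ) + 4))
  have hxper : ∀ s : ℤ, n - (m : ℤ) ≤ s → s ≤ n + (m : ℤ) → x (s + p) = x s := by
    intro s h1 h2
    have e1 : x s = z (s - n) := by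
      rw [hn (s - n) (by simp only [Finset.mem_Icc]; omega)]
      rw [show s - n + n = s by ring]
    have e2 : x (s + p) = z (s - n + p) := by
      rw [hn (s - n + p) (by simp only [Finset.mem_Icc]; omega)]
      rw [show s - n + p + n = s + p by ring]
    rw [e1, e2, hzper (s - n) (by omega) (by omega)]
  -- recurrence function is a recurrence bound
  have hRmem : IsRecurrenceBound x 4 (recurrenceFn x 4) := by
    obtain ⟨M, hM⟩ := hUR 4
    exact Nat.sInf_mem (⟨M, hM⟩ : Set.Nonempty {M | IsRecurrenceBound x 4 M})
  have hmZ : ((recurrenceFn x 4 : ℕ) : ℤ) ≤ 2 * (m : ℤ) + 1 := by exact_mod_cast hm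
  -- every 4-factor of x is one of the p ≤ 4 windows at the start of the periodic window
  have hc4 : complexityZ x 4 ≤ 4 := by
    have hsurj : Function.Surjective (fun r : Fin 4 =>
        (⟨fun i : Fin 4 => x (n - (m : ℤ) + ((r : ℕ) : ℤ) + (i : ℤ)),
          window_mem x 4 _⟩ : ↥(factorsZ x 4))) := by
      rintro ⟨v, hv⟩
      obtain ⟨jj, hj1, hj2, hj3⟩ := hRmem v hv (n - (m : ℤ))
      have hj2' : jj + 3 ≤ n + (m : ℤ) := by
        have h4 : ((4 : ℕ) : ℤ) = 4 := by norm_num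
        omega
      obtain ⟨j0, hL, hU0, hfac⟩ := reduce x (n - (m : ℤ)) (n + (m : ℤ)) p hp1 hxper
        (jj - (n - (m : ℤ))).toNat jj (by omega) hj2'
      refine ⟨⟨(j0 - (n - (m : ℤ))).toNat, by omega⟩, ?_⟩
      apply Subtype.ext; funext i
      show x (n - (m : ℤ) + (((j0 - (n - (m : ℤ))).toNat : ℕ) : ℤ) + (i : ℤ)) = v i
      rw [show n - (m : ℤ) + (((j0 - (n - (m : ℤ))).toNat : ℕ) : ℤ) = j0 by omega]
      rw [← hfac i, ← hj3 i]
    calc complexityZ x 4 ≤ Nat.card (Fin 4) := Nat.card_le_card_of_surjective _ hsurj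
    _ = 4 := by simp
  exact periodic_of_c4 x hc4
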